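/- The Google matrix $\tilde{P} = (1-c)P + \frac{c}{n}E$ has a stationary distribution: there exists a probability vector $\pi$ (nonnegative entries summing to 1) with $\pi \tilde{P} = \pi$. -/

import Mathlib

open Function

theorem google_matrix_stationary_exists
    (n : ℕ) (hn : 1 ≤ n) (P : Matrix (Fin n) (Fin n) ℝ)
    (hP_nonneg : ∀ i j, 0 ≤ P i j)
    (hP_rows : ∀ i, ∑ j, P i j = 1)
    (c : ℝ) (hc : c ∈ Set.Ioo (0 : ℝ) 1)
    (G : Matrix (Fin n) (Fin n) ℝ)
    (hG : ∀ i j, G i j = (1 - c) * P i j + c / n) :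
    ∃ π : Fin n → ℝ, (∀ i, 0 ≤ π i) ∧ (∑ i, π i = 1) ∧
      (∀ j, ∑ i, π i * G i j = π j) := by
  obtain ⟨hc0, hc1⟩ := hc
  have hn0 : (0:ℝ) < (n:ℝ) := by exact_mod_cast Nat.lt_of_lt_of_le Nat.zero_lt_one hn
  have hcn : 0 ≤ c / n := by positivity
  set f : PiLp 1 (fun _ : Fin n => ℝ) → PiLp 1 (fun _ : Fin n => ℝ) :=
    fun x => WithLp.toLp 1 (fun j => (1 - c) * (∑ i, x i * P i j) + c / n) with hfdef
  have hdist : ∀ x y : PiLp 1 (fun _ : Fin n => ℝ), dist x y = ∑ i, |x i - y i| := by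
    intro x y
    rw [PiLp.dist_eq_sum (by norm_num : 0 < ENNReal.toReal 1)]
    simp [Real.dist_eq, ENNReal.toReal_one, Real.rpow_one]
  have h1c : (0:ℝ) ≤ 1 - c := by linarith
  have hK : ContractingWith (1 - c).toNNReal f := by
    constructor
    · rw [← NNReal.coe_lt_coe, Real.coe_toNNReal _ h1c]
      norm_num
      linarith
    · apply LipschitzWith.of_dist_le_mul
      intro x y
      rw [hdist, hdist, Real.coe_toNNReal _ h1c]
      have key : ∀ j, |f x j - f y j| ≤ (1 - c) * ∑ i, |x i - y i| * P i j := by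
        intro j
        have hsub : ∑ i, (x i - y i) * P i j
            = (∑ i, x i * P i j) - ∑ i, y i * P i j := by
          rw [← Finset.sum_sub_distrib]
          exact Finset.sum_congr rfl fun i _ => by ring
        have : f x j - f y j = (1 - c) * ∑ i, (x i - y i) * P i j := by
          simp only [hfdef, PiLp.toLp_apply]
          rw [hsub]
          ring
        rw [this, abs_mul, abs_of_nonneg h1c]
        gcongr
        calc |∑ i, (x i - y i) * P i j| ≤ ∑ i, |(x i - y i) * P i j| :=
              Finset.abs_sum_le_sum_abs _ _
          _ = ∑ i, |x i - y i| * P i j := by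
              apply Finset.sum_congr rfl; intro i _
              rw [abs_mul, abs_of_nonneg (hP_nonneg i j)]
      calc ∑ j, |f x j - f y j| ≤ ∑ j, (1 - c) * ∑ i, |x i - y i| * P i j :=
            Finset.sum_le_sum fun j _ => key j
        _ = (1 - c) * ∑ i, |x i - y i| := by
            rw [← Finset.mul_sum, Finset.sum_comm]
            congr 1
            apply Finset.sum_congr rfl
            intro i _
            rw [← Finset.mul_sum, hP_rows i, mul_one]
  set π : PiLp 1 (fun _ : Fin n => ℝ) := hK.fixedPoint f with hπdef
  have hfix : f π = π := hK.fixedPoint_isFixedPt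
  have hπeq : ∀ j, (1 - c) * (∑ i, π i * P i j) + c / n = π j := by
    intro j
    exact congrFun (congrArg WithLp.ofLp hfix) j
  -- nonnegativity via iterates from 0
  have hiter : ∀ k : ℕ, ∀ j, 0 ≤ (f^[k] (0 : PiLp 1 (fun _ : Fin n => ℝ))) j := by
    intro k
    induction k with
    | zero => intro j; simp [PiLp.zero_apply]
    | succ k ih =>
      intro j
      rw [Function.iterate_succ_apply']
      have : 0 ≤ ∑ i, (f^[k] (0 : PiLp 1 (fun _ : Fin n => ℝ))) i * P i j :=
        Finset.sum_nonneg fun i _ => mul_nonneg (ih i) (hP_nonneg i j)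
      simp only [hfdef, PiLp.toLp_apply]
      positivity
  have hnonneg : ∀ j, 0 ≤ π j := by
    intro j
    have htend := hK.tendsto_iterate_fixedPoint (0 : PiLp 1 (fun _ : Fin n => ℝ))
    have hcont : Continuous fun x : PiLp 1 (fun _ : Fin n => ℝ) => x j :=
      (continuous_apply j).comp (PiLp.continuous_ofLp (p := 1) (β := fun _ : Fin n => ℝ))
    have htendj : Filter.Tendsto (fun k => (f^[k] (0 : PiLp 1 (fun _ : Fin n => ℝ))) j)
        Filter.atTop (nhds (π j)) := (hcont.tendsto π).comp htend
    exact ge_of_tendsto' htendj fun k => hiter k j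
  -- sum equals one
  have hsum : ∑ i, π i = 1 := by
    have h1 : ∑ j, π j = ∑ j, ((1 - c) * (∑ i, π i * P i j) + c / n) := by
      apply Finset.sum_congr rfl
      intro j _
      rw [hπeq j]
    rw [Finset.sum_add_distrib, ← Finset.mul_sum, Finset.sum_const, Finset.card_univ,
      Fintype.card_fin, nsmul_eq_mul, Finset.sum_comm] at h1
    have h2 : ∑ i, ∑ j, π i * P i j = ∑ i, π i := by
      apply Finset.sum_congr rfl
      intro i _
      rw [← Finset.mul_sum, hP_rows i, mul_one]
    rw [h2] at h1
    have h3 : (n : ℝ) * (c / n) = c := by field_simp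
    rw [h3] at h1
    have := hc0.ne'
    nlinarith [h1]
  refine ⟨π, hnonneg, hsum, ?_⟩
  intro j
  have : ∑ i, π i * G i j = (1 - c) * (∑ i, π i * P i j) + (c / n) * ∑ i, π i := by
    simp only [Finset.mul_sum]
    rw [← Finset.sum_add_distrib]
    apply Finset.sum_congr rfl
    intro i _
    rw [hG i j]
    ring
  rw [this, hsum, mul_one, hπeq j]
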